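/- Change-of-variables identity for the double multiplication operator: for β > 1, a positive definite matrix X, ω ∈ ℝ, and any B ∈ M_n(ℂ), ∫₀¹∫₀¹ e^{((β−1)ω v + ω u)/β} X^{(β−1)v + u} B X^{−(β−1)v − u} du dv = ∫₀¹ e^{ωs} X^{βs} B X^{−βs} f(s) ds, where f(s) = (β²/(2(β−1)))·( min(s, 2(β−1)/β − s) − max(−s, s − 2/β) ). -/

import Mathlib

open Matrix MeasureTheory intervalIntegral
open scoped ComplexOrder

attribute [local instance] Matrix.frobeniusNormedAddCommGroup Matrix.frobeniusNormedSpace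

/-- Real matrix power via continuous functional calculus. -/
noncomputable def mpow {n : ℕ} (A : Matrix (Fin n) (Fin n) ℂ) (s : ℝ) :
    Matrix (Fin n) (Fin n) ℂ :=
  cfc (fun x : ℝ => x ^ s) A

lemma mpow_cont {n : ℕ} {X : Matrix (Fin n) (Fin n) ℂ} (hX : X.PosDef) :
    Continuous fun t : ℝ => mpow X t := by
  have hH : X.IsHermitian := hX.1
  have heq : ∀ t : ℝ, mpow X t =
      (Matrix.IsHermitian.eigenvectorUnitary hH : Matrix (Fin n) (Fin n) ℂ) *
        Matrix.diagonal (fun i => ((hH.eigenvalues i ^ t : ℝ) : ℂ)) *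
        star (Matrix.IsHermitian.eigenvectorUnitary hH : Matrix (Fin n) (Fin n) ℂ) := by
    intro t
    rw [mpow, hH.cfc_eq, Matrix.IsHermitian.cfc]
    rfl
  simp only [heq]
  refine (Continuous.matrix_mul (Continuous.matrix_mul continuous_const ?_) continuous_const)
  refine Continuous.matrix_diagonal ?_
  refine continuous_pi fun i => ?_
  have hd : (0:ℝ) < hH.eigenvalues i := hX.eigenvalues_pos i
  have : (fun t : ℝ => ((hH.eigenvalues i ^ t : ℝ) : ℂ))
      = fun t : ℝ => ((Real.exp (Real.log (hH.eigenvalues i) * t) : ℝ) : ℂ) := by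
    funext t
    rw [Real.rpow_def_of_pos hd]
  rw [this]
  exact Complex.continuous_ofReal.comp (Real.continuous_exp.comp (continuous_const.mul continuous_id))

/-- The weight function `f(s) = (β²/(2(β-1)))(min(s, 2(β-1)/β - s) - max(-s, s - 2/β))`. -/
noncomputable def wf (β s : ℝ) : ℝ :=
  (β ^ 2 / (2 * (β - 1))) * (min s (2 * (β - 1) / β - s) - max (-s) (s - 2 / β))

section Aux

variable {E : Type*} [NormedAddCommGroup E] [NormedSpace ℝ E] [CompleteSpace E]

/-- integration by parts for `t • F t`. -/
lemma parts_aux (F : ℝ → E) (hF : Continuous F) (a b : ℝ) :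
    ∫ t in a..b, t • F t
      = b • (∫ x in (0:ℝ)..b, F x) - a • (∫ x in (0:ℝ)..a, F x)
        - ∫ t in a..b, (∫ x in (0:ℝ)..t, F x) := by
  set G : ℝ → E := fun t => ∫ x in (0:ℝ)..t, F x with hGdef
  have hGd : ∀ t : ℝ, HasDerivAt G (F t) t := fun t =>
    integral_hasDerivAt_right (hF.intervalIntegrable _ _)
      (hF.stronglyMeasurableAtFilter _ _) hF.continuousAt
  have hGc : Continuous G := continuous_iff_continuousAt.2 fun t => (hGd t).continuousAt
  have hP : ∀ t : ℝ, HasDerivAt (fun t : ℝ => t • G t) (G t + t • F t) t := by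
    intro t
    have := (hasDerivAt_id t).smul (hGd t)
    convert this using 1
    · rfl
    · rw [id_eq, one_smul, add_comm]
  have h1 : ∫ t in a..b, (G t + t • F t) = b • G b - a • G a := by
    have := integral_eq_sub_of_hasDerivAt (a := a) (b := b) (f := fun t : ℝ => t • G t)
      (f' := fun t => G t + t • F t) (fun t _ => hP t)
      ((hGc.add (continuous_id.smul hF)).intervalIntegrable _ _)
    simpa using this
  have h2 : ∫ t in a..b, (G t + t • F t)
      = (∫ t in a..b, G t) + ∫ t in a..b, t • F t :=
    integral_add (hGc.intervalIntegrable _ _) ((continuous_id.smul hF).intervalIntegrable _ _)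
  rw [h2] at h1
  rw [← h1]
  abel

lemma key_cov (β : ℝ) (hβ : 1 < β) (F : ℝ → E) (hF : Continuous F) :
    (∫ v in (0:ℝ)..1, ∫ u in (0:ℝ)..1, F ((β - 1) * v + u))
      = ∫ s in (0:ℝ)..1, wf β s • F (β * s) := by
  have hb0 : (0:ℝ) < β - 1 := by linarith
  have hbne : β - 1 ≠ 0 := ne_of_gt hb0
  have hβ0 : (0:ℝ) < β := by linarith
  have hβne : β ≠ 0 := ne_of_gt hβ0
  set G : ℝ → E := fun t => ∫ x in (0:ℝ)..t, F x with hGdef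
  have hGd : ∀ t : ℝ, HasDerivAt G (F t) t := fun t =>
    integral_hasDerivAt_right (hF.intervalIntegrable _ _)
      (hF.stronglyMeasurableAtFilter _ _) hF.continuousAt
  have hGc : Continuous G := continuous_iff_continuousAt.2 fun t => (hGd t).continuousAt
  -- inner integral
  have h1 : ∀ v : ℝ, (∫ u in (0:ℝ)..1, F ((β - 1) * v + u))
      = G ((β - 1) * v + 1) - G ((β - 1) * v) := by
    intro v
    rw [integral_comp_add_left F ((β - 1) * v), hGdef]
    rw [integral_interval_sub_left (hF.intervalIntegrable 0 ((β - 1) * v + 1))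
      (hF.intervalIntegrable 0 ((β - 1) * v))]
    norm_num
  -- LHS
  have hLHS : (∫ v in (0:ℝ)..1, ∫ u in (0:ℝ)..1, F ((β - 1) * v + u))
      = (β - 1)⁻¹ • ((∫ t in (1:ℝ)..β, G t) - ∫ t in (0:ℝ)..(β - 1), G t) := by
    rw [intervalIntegral.integral_congr (g := fun v =>
        G ((β - 1) * v + 1) - G ((β - 1) * v)) (fun v _ => h1 v)]
    rw [integral_sub ((show Continuous fun v : ℝ => G ((β - 1) * v + 1) by fun_prop).intervalIntegrable _ _)
      ((show Continuous fun v : ℝ => G ((β - 1) * v) by fun_prop).intervalIntegrable _ _)]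
    have e1 : (∫ v in (0:ℝ)..1, G ((β - 1) * v + 1))
        = (β - 1)⁻¹ • ∫ t in (1:ℝ)..β, G t := by
      rw [integral_comp_mul_add G hbne 1]
      norm_num
    have e2 : (∫ v in (0:ℝ)..1, G ((β - 1) * v))
        = (β - 1)⁻¹ • ∫ t in (0:ℝ)..(β - 1), G t := by
      rw [integral_comp_mul_left G hbne]
      norm_num
    rw [e1, e2, smul_sub]
  -- continuity helpers
  have hminc : Continuous fun t : ℝ => min t (β - 1) • F t :=
    (continuous_id.min continuous_const).smul hF
  have hmaxc : Continuous fun t : ℝ => max 0 (t - 1) • F t :=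
    (continuous_const.max (continuous_id.sub continuous_const)).smul hF
  -- piece A
  have A : (∫ t in (0:ℝ)..β, min t (β - 1) • F t)
      = (β - 1) • G β - ∫ t in (0:ℝ)..(β - 1), G t := by
    have hsplit := integral_add_adjacent_intervals (μ := MeasureTheory.volume) (a := (0:ℝ)) (b := β - 1) (c := β)
      (hminc.intervalIntegrable _ _) (hminc.intervalIntegrable _ _)
    have e1 : (∫ t in (0:ℝ)..(β - 1), min t (β - 1) • F t)
        = ∫ t in (0:ℝ)..(β - 1), t • F t := by
      refine intervalIntegral.integral_congr fun t ht => ?_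
      rw [Set.uIcc_of_le hb0.le] at ht
      rw [min_eq_left ht.2]
    have e2 : (∫ t in (β - 1:ℝ)..β, min t (β - 1) • F t) = (β - 1) • (G β - G (β - 1)) := by
      have h' : (∫ t in (β - 1:ℝ)..β, min t (β - 1) • F t)
          = ∫ t in (β - 1:ℝ)..β, (β - 1) • F t := by
        refine intervalIntegral.integral_congr fun t ht => ?_
        rw [Set.uIcc_of_le (by linarith : β - 1 ≤ β)] at ht
        rw [min_eq_right ht.1]
      rw [h', intervalIntegral.integral_smul]
      congr 1
      simp only [hGdef]
      exact (integral_interval_sub_left (hF.intervalIntegrable 0 β)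
        (hF.intervalIntegrable 0 (β - 1))).symm
    rw [← hsplit, e1, e2, parts_aux F hF 0 (β - 1)]
    simp only [hGdef]
    module
  -- piece B
  have B : (∫ t in (0:ℝ)..β, max 0 (t - 1) • F t)
      = (β - 1) • G β - ∫ t in (1:ℝ)..β, G t := by
    have hsplit := integral_add_adjacent_intervals (μ := MeasureTheory.volume) (a := (0:ℝ)) (b := 1) (c := β)
      (hmaxc.intervalIntegrable _ _) (hmaxc.intervalIntegrable _ _)
    have e1 : (∫ t in (0:ℝ)..1, max 0 (t - 1) • F t) = 0 := by
      have h' : (∫ t in (0:ℝ)..1, max 0 (t - 1) • F t) = ∫ t in (0:ℝ)..1, (0:ℝ) • F t := by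
        refine intervalIntegral.integral_congr fun t ht => ?_
        rw [Set.uIcc_of_le (by norm_num : (0:ℝ) ≤ 1)] at ht
        rw [max_eq_left (by linarith [ht.2])]
      rw [h']
      simp only [zero_smul, intervalIntegral.integral_zero]
    have e2 : (∫ t in (1:ℝ)..β, max 0 (t - 1) • F t)
        = (∫ t in (1:ℝ)..β, t • F t) - ∫ t in (1:ℝ)..β, F t := by
      have h' : (∫ t in (1:ℝ)..β, max 0 (t - 1) • F t)
          = ∫ t in (1:ℝ)..β, (t - 1) • F t := by
        refine intervalIntegral.integral_congr fun t ht => ?_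
        rw [Set.uIcc_of_le hβ.le] at ht
        rw [max_eq_right (by linarith [ht.1])]
      have h'' : ∀ t : ℝ, (t - 1) • F t = t • F t - F t := by
        intro t; rw [sub_smul, one_smul]
      rw [h']
      simp only [h'']
      exact integral_sub ((continuous_id.smul hF).intervalIntegrable _ _)
        (hF.intervalIntegrable _ _)
    have e3 : (∫ t in (1:ℝ)..β, F t) = G β - G 1 := by
      simp only [hGdef]
      exact (integral_interval_sub_left (hF.intervalIntegrable 0 β)
        (hF.intervalIntegrable 0 1)).symm
    rw [← hsplit, e1, e2, e3, parts_aux F hF 1 β]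
    simp only [hGdef]
    module
  -- the weight identity
  have hwf : ∀ t : ℝ, wf β (t / β) = (β / (β - 1)) * (min t (β - 1) - max 0 (t - 1)) := by
    intro t
    have m1 : min (t / β) (2 * (β - 1) / β - t / β) = (2 * min t (β - 1) - t) / β := by
      have hrew : 2 * (β - 1) / β - t / β = (2 * (β - 1) - t) / β := by ring
      rw [hrew]
      rcases le_total t (β - 1) with h | h
      · have h2 : t / β ≤ (2 * (β - 1) - t) / β :=
          (div_le_div_iff_of_pos_right hβ0).2 (by linarith)
        rw [min_eq_left h, min_eq_left h2]
        try ring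
      · have h2 : (2 * (β - 1) - t) / β ≤ t / β :=
          (div_le_div_iff_of_pos_right hβ0).2 (by linarith)
        rw [min_eq_right h, min_eq_right h2]
        try ring
    have m2 : max (-(t / β)) (t / β - 2 / β) = (2 * max 0 (t - 1) - t) / β := by
      have hrew : t / β - 2 / β = (t - 2) / β := by ring
      have hrew2 : -(t / β) = (-t) / β := by ring
      rw [hrew, hrew2]
      rcases le_total t 1 with h | h
      · have h2 : (t - 2) / β ≤ (-t) / β :=
          (div_le_div_iff_of_pos_right hβ0).2 (by linarith)
        rw [max_eq_left h2, max_eq_left (by linarith : t - 1 ≤ 0)]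
        try ring
      · have h2 : (-t) / β ≤ (t - 2) / β :=
          (div_le_div_iff_of_pos_right hβ0).2 (by linarith)
        rw [max_eq_right h2, max_eq_right (by linarith : (0:ℝ) ≤ t - 1)]
        try ring
    unfold wf
    rw [m1, m2]
    field_simp
    ring
  -- RHS
  have hRHS : (∫ s in (0:ℝ)..1, wf β s • F (β * s))
      = (β - 1)⁻¹ • ((∫ t in (1:ℝ)..β, G t) - ∫ t in (0:ℝ)..(β - 1), G t) := by
    have hsub : (∫ s in (0:ℝ)..1, wf β s • F (β * s))
        = β⁻¹ • ∫ t in (0:ℝ)..β, wf β (t / β) • F t := by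
      have h0 := integral_comp_mul_left (a := (0:ℝ)) (b := 1)
        (fun t => wf β (t / β) • F t) hβne
      simp only [mul_zero, mul_one] at h0
      rw [← h0]
      refine intervalIntegral.integral_congr fun s _ => ?_
      simp only [mul_div_cancel_left₀ s hβne]
    rw [hsub]
    have h5 : (∫ t in (0:ℝ)..β, wf β (t / β) • F t)
        = (β / (β - 1)) • ((∫ t in (0:ℝ)..β, min t (β - 1) • F t)
            - ∫ t in (0:ℝ)..β, max 0 (t - 1) • F t) := by
      have h6 : ∀ t : ℝ, wf β (t / β) • F t
          = (β / (β - 1)) • (min t (β - 1) • F t - max 0 (t - 1) • F t) := by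
        intro t
        rw [hwf t, mul_smul, sub_smul]
      simp only [h6]
      rw [intervalIntegral.integral_smul]
      congr 1
      exact integral_sub (hminc.intervalIntegrable _ _) (hmaxc.intervalIntegrable _ _)
    rw [h5, A, B, smul_smul]
    have hcoeff : β⁻¹ * (β / (β - 1)) = (β - 1)⁻¹ := by field_simp
    rw [hcoeff]
    congr 1
    abel
  rw [hLHS, hRHS]

end Aux

/-- Change-of-variables identity for the double multiplication operator. -/
theorem double_integral_change_of_variables {n : ℕ}
    (X B : Matrix (Fin n) (Fin n) ℂ) (hX : X.PosDef) (β ω : ℝ) (hβ : 1 < β) :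
    (∫ v in (0:ℝ)..1, ∫ u in (0:ℝ)..1,
        Real.exp (((β - 1) * ω * v + ω * u) / β) •
          (mpow X ((β - 1) * v + u) * B * mpow X (-((β - 1) * v + u))))
      = ∫ s in (0:ℝ)..1,
          (Real.exp (ω * s) * wf β s) • (mpow X (β * s) * B * mpow X (-(β * s))) := by
  have hβ0 : (0:ℝ) < β := by linarith
  have hβne : β ≠ 0 := ne_of_gt hβ0
  set F : ℝ → Matrix (Fin n) (Fin n) ℂ :=
    fun t => Real.exp (ω * t / β) • (mpow X t * B * mpow X (-t)) with hFdef
  have hFc : Continuous F := by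
    rw [hFdef]
    refine Continuous.smul (f := fun t => Real.exp (ω * t / β))
      (g := fun t => mpow X t * B * mpow X (-t)) ?_ ?_
    · exact Real.continuous_exp.comp (by continuity)
    · exact ((mpow_cont hX).matrix_mul continuous_const).matrix_mul
        ((mpow_cont hX).comp continuous_neg)
  have hkey := key_cov β hβ F hFc
  have hL : (∫ v in (0:ℝ)..1, ∫ u in (0:ℝ)..1,
        Real.exp (((β - 1) * ω * v + ω * u) / β) •
          (mpow X ((β - 1) * v + u) * B * mpow X (-((β - 1) * v + u))))
      = ∫ v in (0:ℝ)..1, ∫ u in (0:ℝ)..1, F ((β - 1) * v + u) := by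
    refine intervalIntegral.integral_congr fun v _ => ?_
    refine intervalIntegral.integral_congr fun u _ => ?_
    rw [hFdef]
    congr 2
    ring
  have hR : (∫ s in (0:ℝ)..1, wf β s • F (β * s))
      = ∫ s in (0:ℝ)..1,
          (Real.exp (ω * s) * wf β s) • (mpow X (β * s) * B * mpow X (-(β * s))) := by
    refine intervalIntegral.integral_congr fun s _ => ?_
    rw [hFdef]
    rw [smul_smul]
    congr 1
    rw [mul_comm]
    congr 1
    congr 1
    field_simp
  rw [hL, hkey, hR]
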